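/- Let θ, t ∈ ℝ, H = {z ∈ ℂ : Re(z·e^{−iθ}) > t}, z₀ ∈ H, u = Re(z₀·e^{−iθ}) − t, and 0 < r < 1, and set s(r) = log((1+r)/(1−r)). The map T(z) = i·(z·e^{−iθ} − t) is a bijection from H onto the upper half-plane ℍ, and the hyperbolic ball of H of radius s(r) about z₀, namely {w ∈ H : ρ(T(z₀), T(w)) < s(r)}, equals the open Euclidean disk with center z₀ + 2ur²e^{iθ}/(1−r²) and radius 2ur/(1−r²). -/

import Mathlib

open Complex

/-- The hyperbolic distance on the upper half-plane,
`ρ(z,w) = 2·arsinh(|z-w| / (2√(Im z · Im w)))`. -/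
noncomputable def hypDist (z w : ℂ) : ℝ :=
  2 * Real.arsinh (‖z - w‖ / (2 * Real.sqrt (z.im * w.im)))

theorem hlogr (r : ℝ) (hr0 : 0 < r) (hr1 : r < 1) :
    Real.log ((1+r)/(1-r)) = 2 * Real.arsinh (r / Real.sqrt (1 - r^2)) := by
  have hr2 : (0:ℝ) < 1 - r^2 := by nlinarith
  have hp : (0:ℝ) < 1 + r := by linarith
  have hm : (0:ℝ) < 1 - r := by linarith
  have hs : Real.sqrt (1 - r^2) > 0 := Real.sqrt_pos.mpr hr2
  rw [Real.arsinh]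
  have h1 : Real.sqrt (1 + (r / Real.sqrt (1 - r^2))^2) = 1 / Real.sqrt (1-r^2) := by
    rw [show 1 + (r / Real.sqrt (1 - r^2))^2 = (1 / Real.sqrt (1-r^2))^2 by
      rw [div_pow, div_pow, Real.sq_sqrt hr2.le]; field_simp; ring]
    exact Real.sqrt_sq (by positivity)
  rw [h1, show r / Real.sqrt (1-r^2) + 1 / Real.sqrt (1-r^2) = (1+r) / Real.sqrt (1-r^2) by ring]
  rw [Real.log_div hp.ne' hs.ne', Real.log_sqrt hr2.le,
    show 1 - r^2 = (1+r)*(1-r) by ring, Real.log_mul hp.ne' hm.ne',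
    Real.log_div hp.ne' hm.ne']
  ring


theorem stmt8_bij (θ t : ℝ) :
    Set.BijOn (fun z : ℂ => I * (z * Complex.exp (-(θ : ℂ) * I) - (t : ℂ)))
      {z : ℂ | t < (z * Complex.exp (-(θ : ℂ) * I)).re} {z : ℂ | 0 < z.im} := by
  have hee : Complex.exp (-(θ:ℂ)*I) * Complex.exp ((θ:ℂ)*I) = 1 := by
    rw [← Complex.exp_add]
    ring_nf
    exact Complex.exp_zero
  have hne : Complex.exp (-(θ:ℂ)*I) ≠ 0 := Complex.exp_ne_zero _
  have him : ∀ z : ℂ, (I * (z * Complex.exp (-(θ:ℂ)*I) - (t:ℂ))).im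
      = (z * Complex.exp (-(θ:ℂ)*I)).re - t := by
    intro z; simp
  refine ⟨fun z hz => ?_, fun z hz w hw h => ?_, fun w hw => ?_⟩
  · simp only [Set.mem_setOf_eq] at hz ⊢
    rw [him]
    linarith
  · simp only at h
    have := mul_left_cancel₀ I_ne_zero h
    have := sub_left_injective this
    exact mul_right_cancel₀ hne this
  · refine ⟨(-I*w + t) * Complex.exp ((θ:ℂ)*I), ?_, ?_⟩
    all_goals {
      have h2 : (-I*w + (t:ℂ)) * Complex.exp ((θ:ℂ)*I) * Complex.exp (-(θ:ℂ)*I) = -I*w + t := by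
        rw [mul_assoc, mul_comm (Complex.exp _), hee, mul_one]
      simp only [Set.mem_setOf_eq] at hw ⊢
      rw [h2]
      first
      | (simp [Complex.mul_re, Complex.add_re]; linarith)
      | (ring_nf; simp [Complex.I_sq])
    }

set_option maxHeartbeats 1000000 in
theorem stmt8_ball (θ t : ℝ) (z₀ : ℂ) (r : ℝ) (hr0 : 0 < r) (hr1 : r < 1)
    (hz₀ : t < (z₀ * Complex.exp (-(θ : ℂ) * I)).re) :
    {w : ℂ | t < (w * Complex.exp (-(θ : ℂ) * I)).re ∧
        hypDist (I * (z₀ * Complex.exp (-(θ : ℂ) * I) - (t : ℂ)))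
            (I * (w * Complex.exp (-(θ : ℂ) * I) - (t : ℂ)))
          < Real.log ((1 + r) / (1 - r))} =
      Metric.ball
        (z₀ + 2 * (((z₀ * Complex.exp (-(θ : ℂ) * I)).re - t : ℝ) : ℂ) * (r : ℂ) ^ 2
            * Complex.exp ((θ : ℂ) * I) / (1 - (r : ℂ) ^ 2))
        (2 * ((z₀ * Complex.exp (-(θ : ℂ) * I)).re - t) * r / (1 - r ^ 2)) := by
  have hr2 : (0:ℝ) < 1 - r^2 := by nlinarith
  have hsr : Real.sqrt (1 - r^2) > 0 := Real.sqrt_pos.mpr hr2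
  set e : ℂ := Complex.exp (-(θ:ℂ)*I) with he
  have hee : Complex.exp ((θ:ℂ)*I) * e = 1 := by
    rw [he, ← Complex.exp_add]; ring_nf; exact Complex.exp_zero
  have habs : ‖e‖ = 1 := by
    rw [he, Complex.norm_exp]; simp
  set u : ℝ := (z₀ * e).re - t with hu
  have hu0 : 0 < u := sub_pos.mpr hz₀
  ext w
  simp only [Set.mem_setOf_eq, Metric.mem_ball, Complex.dist_eq]
  set ζ : ℂ := (w - z₀) * e with hζ
  set x : ℝ := ζ.re with hx
  set y : ℝ := ζ.im with hy
  set v : ℝ := (w * e).re - t with hv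
  set A : ℝ := 2*u*r^2/(1-r^2) with hAdef
  have hA1 : A * (1-r^2) = 2*u*r^2 := by rw [hAdef]; field_simp
  have hvx : v = u + x := by
    rw [hv, hu, hx, hζ, sub_mul, Complex.sub_re]; ring
  have hA : (w - (z₀ + 2 * ((u:ℝ) : ℂ) * (r : ℂ) ^ 2 * Complex.exp ((θ : ℂ) * I) / (1 - (r : ℂ) ^ 2))) * e
      = ζ - ((A : ℝ) : ℂ) := by
    have h1 : (w - (z₀ + 2 * ((u:ℝ) : ℂ) * (r : ℂ) ^ 2 * Complex.exp ((θ : ℂ) * I) / (1 - (r : ℂ) ^ 2))) * e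
        = ζ - (2 * ((u:ℝ):ℂ) * (r:ℂ)^2) * (Complex.exp ((θ:ℂ)*I) * e) / (1 - (r:ℂ)^2) := by
      rw [hζ]; ring
    rw [h1, hee, mul_one, hAdef]
    push_cast
    ring
  have habs_wc : ‖w - (z₀ + 2 * ((u:ℝ):ℂ) * (r:ℂ)^2 * Complex.exp ((θ:ℂ)*I) / (1 - (r:ℂ)^2))‖
      = ‖ζ - ((A:ℝ) : ℂ)‖ := by
    rw [← hA, norm_mul, habs, mul_one]
  have hwc_sq : ‖ζ - ((A:ℝ) : ℂ)‖^2 = (x - A)^2 + y^2 := by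
    rw [Complex.sq_norm, Complex.normSq_apply, Complex.sub_re, Complex.sub_im,
      Complex.ofReal_re, Complex.ofReal_im, ← hx, ← hy]
    ring
  have hdsq : ‖z₀ - w‖^2 = x^2 + y^2 := by
    have h1 : ‖z₀ - w‖ = ‖ζ‖ := by
      rw [hζ, norm_mul, habs, mul_one, norm_sub_rev]
    rw [h1, Complex.sq_norm, Complex.normSq_apply, ← hx, ← hy]
    ring
  have hdiff : I * (z₀ * e - (t:ℂ)) - I * (w * e - (t:ℂ)) = I * e * (z₀ - w) := by ring
  have him1 : (I * (z₀ * e - (t:ℂ))).im = u := by rw [hu]; simp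
  have him2 : (I * (w * e - (t:ℂ))).im = v := by rw [hv]; simp
  have hhyp : hypDist (I * (z₀ * e - (t:ℂ))) (I * (w * e - (t:ℂ)))
      = 2 * Real.arsinh (‖z₀ - w‖ / (2 * Real.sqrt (u * v))) := by
    rw [hypDist, him1, him2, hdiff, norm_mul, norm_mul, Complex.norm_I, habs, one_mul, one_mul]
  have hR0 : 0 < 2 * u * r / (1 - r^2) := by positivity
  clear_value x y v A u ζ
  have hexp : ((x - A)^2 + y^2) * (1-r^2)^2 = (x*(1-r^2) - 2*u*r^2)^2 + y^2*(1-r^2)^2 := by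
    rw [← hA1]; ring
  have hkey : (((x - A)^2 + y^2) * (1-r^2)^2 < (2*u*r)^2) ↔
      ((x^2+y^2)*(1-r^2)*(1-r^2) < r^2*(4*(u*(u+x)))*(1-r^2)) := by
    rw [hexp]
    constructor <;> intro h <;> nlinarith [h]
  rw [hhyp, habs_wc, hlogr r hr0 hr1]
  constructor
  · rintro ⟨hw, hlt⟩
    have hv0 : 0 < v := by rw [hv]; exact sub_pos.mpr hw
    have huv : 0 < u * v := mul_pos hu0 hv0
    have hsuv : 0 < Real.sqrt (u*v) := Real.sqrt_pos.mpr huv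
    have h0 : Real.arsinh (‖z₀ - w‖ / (2 * Real.sqrt (u*v)))
        < Real.arsinh (r / Real.sqrt (1-r^2)) := by linarith
    have h1 := Real.arsinh_lt_arsinh.mp h0
    have h2 : ‖z₀ - w‖ * Real.sqrt (1-r^2) < r * (2 * Real.sqrt (u*v)) :=
      (div_lt_div_iff₀ (by positivity) hsr).mp h1
    have h3 : (x^2 + y^2) * (1-r^2) < r^2 * (4 * (u*(u+x))) := by
      have h4 := pow_lt_pow_left₀ h2 (by positivity) (n := 2) (by norm_num)
      rw [mul_pow, mul_pow, mul_pow, Real.sq_sqrt hr2.le, Real.sq_sqrt huv.le, hdsq, hvx] at h4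
      nlinarith [h4]
    refine lt_of_pow_lt_pow_left₀ 2 hR0.le ?_
    rw [hwc_sq, div_pow, lt_div_iff₀ (by positivity)]
    exact hkey.mpr (by nlinarith [mul_lt_mul_of_pos_right h3 hr2])
  · intro hlt
    have h5 : ((x - A)^2 + y^2) * (1-r^2)^2 < (2*u*r)^2 := by
      have h6 := pow_lt_pow_left₀ hlt (norm_nonneg _) (n := 2) (by norm_num)
      rw [hwc_sq, div_pow] at h6
      rw [← lt_div_iff₀ (by positivity)]
      exact h6
    have h3 : (x^2 + y^2) * (1-r^2) < r^2 * (4 * (u*v)) := by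
      have h6 := hkey.mp h5
      have h7 := lt_of_mul_lt_mul_right h6 hr2.le
      rw [← hvx] at h7
      linarith
    have hv0 : 0 < v := by
      nlinarith [h3, mul_nonneg (add_nonneg (sq_nonneg x) (sq_nonneg y)) hr2.le,
        mul_pos (mul_pos (show (0:ℝ) < 4*r^2 by positivity) hu0) hu0]
    refine ⟨by have h8 := hv0; rw [hv] at h8; exact sub_pos.mp h8, ?_⟩
    have huv : 0 < u * v := mul_pos hu0 hv0
    have hsuv : 0 < Real.sqrt (u*v) := Real.sqrt_pos.mpr huv
    have h2 : ‖z₀ - w‖ * Real.sqrt (1-r^2) < r * (2 * Real.sqrt (u*v)) := by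
      refine lt_of_pow_lt_pow_left₀ 2 (by positivity) ?_
      rw [mul_pow, mul_pow, mul_pow, Real.sq_sqrt hr2.le, Real.sq_sqrt huv.le, hdsq]
      nlinarith [h3]
    have h1 : ‖z₀ - w‖ / (2 * Real.sqrt (u*v)) < r / Real.sqrt (1-r^2) :=
      (div_lt_div_iff₀ (by positivity) hsr).mpr h2
    have := Real.arsinh_lt_arsinh.mpr h1
    linarith

theorem stmt8 (θ t : ℝ) (z₀ : ℂ) (r : ℝ) (hr0 : 0 < r) (hr1 : r < 1)
    (hz₀ : t < (z₀ * Complex.exp (-(θ : ℂ) * I)).re) :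
    Set.BijOn (fun z : ℂ => I * (z * Complex.exp (-(θ : ℂ) * I) - (t : ℂ)))
      {z : ℂ | t < (z * Complex.exp (-(θ : ℂ) * I)).re} {z : ℂ | 0 < z.im} ∧
    {w : ℂ | t < (w * Complex.exp (-(θ : ℂ) * I)).re ∧
        hypDist (I * (z₀ * Complex.exp (-(θ : ℂ) * I) - (t : ℂ)))
            (I * (w * Complex.exp (-(θ : ℂ) * I) - (t : ℂ)))
          < Real.log ((1 + r) / (1 - r))} =
      Metric.ball
        (z₀ + 2 * (((z₀ * Complex.exp (-(θ : ℂ) * I)).re - t : ℝ) : ℂ) * (r : ℂ) ^ 2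
            * Complex.exp ((θ : ℂ) * I) / (1 - (r : ℂ) ^ 2))
        (2 * ((z₀ * Complex.exp (-(θ : ℂ) * I)).re - t) * r / (1 - r ^ 2)) := by
  exact ⟨stmt8_bij θ t, stmt8_ball θ t z₀ r hr0 hr1 hz₀⟩
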